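/- (Proposition 1: the addition map preserves the Duffing Hamiltonian.) Let A, B, s, q, p, λ, μ ∈ ℂ with s² = -B, q ≠ λ, and suppose the two points lie on the same level curve of the Hamiltonian: p² + A·q² + B·q⁴ = μ² + A·λ² + B·λ⁴. Define the parabola P(x) = s·x² + b₁x + b₀ := s(x - q)(x - λ) + (x - λ)p/(q - λ) + (x - q)μ/(λ - q), and assume b₁·s ≠ 0. Set q' = -q - λ - (2b₀s + b₁² + A)/(2b₁s) and p' = -P(q'). Then p'² + A·q'² + B·q'⁴ = p² + A·q² + B·q⁴, i.e. the discrete map (q, p) ↦ (q', p') obtained by adding the point (λ, μ) on the elliptic curve y² + Ax² + Bx⁴ - E = 0 preserves the Hamiltonian H = p² + Aq² + Bq⁴ of the Duffing oscillator. -/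

import Mathlib

/-- Proposition 1: the discrete map `(q,p) ↦ (q',p')` obtained by adding
the point `(λ,μ)` on the elliptic curve `y² + Ax² + Bx⁴ - E = 0` (level set of the
Duffing Hamiltonian) preserves the Hamiltonian `H = p² + Aq² + Bq⁴`. -/
theorem duffing_addition_map_preserves_hamiltonian
    (A B s q p lam mu b0 b1 q' p' : ℂ)
    (hs : s ^ 2 = -B) (hql : q ≠ lam)
    (hlevel : p ^ 2 + A * q ^ 2 + B * q ^ 4 = mu ^ 2 + A * lam ^ 2 + B * lam ^ 4)
    (P : ℂ → ℂ)
    (hPdef : ∀ x, P x = s * (x - q) * (x - lam) + (x - lam) * p / (q - lam)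
        + (x - q) * mu / (lam - q))
    (hPb : ∀ x, P x = s * x ^ 2 + b1 * x + b0)
    (hden : b1 * s ≠ 0)
    (hq' : q' = -q - lam - (2 * b0 * s + b1 ^ 2 + A) / (2 * b1 * s))
    (hp' : p' = -P q') :
    p' ^ 2 + A * q' ^ 2 + B * q' ^ 4 = p ^ 2 + A * q ^ 2 + B * q ^ 4 := by
  have hd : q - lam ≠ 0 := sub_ne_zero.mpr hql
  have hd' : lam - q ≠ 0 := sub_ne_zero.mpr (Ne.symm hql)
  -- P interpolates the two points
  have hpq : s * q ^ 2 + b1 * q + b0 = p := by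
    have h1 := hPdef q
    have h2 := hPb q
    rw [h2] at h1
    field_simp at h1
    have h3 : (s * q ^ 2 + b1 * q + b0 - p) * (lam - q) = 0 := by linear_combination h1
    exact sub_eq_zero.mp ((mul_eq_zero.mp h3).resolve_right hd')
  have hplam : s * lam ^ 2 + b1 * lam + b0 = mu := by
    have h1 := hPdef lam
    have h2 := hPb lam
    rw [h2] at h1
    field_simp at h1
    have h3 : (s * lam ^ 2 + b1 * lam + b0 - mu) * (q - lam) = 0 := by linear_combination h1
    exact sub_eq_zero.mp ((mul_eq_zero.mp h3).resolve_right hd)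
  -- coefficients of the cubic G(x) = P(x)^2 + A x^2 + B x^4 - E
  set E := p ^ 2 + A * q ^ 2 + B * q ^ 4 with hE
  set c3 := 2 * s * b1 with hc3
  set c2 := b1 ^ 2 + 2 * s * b0 + A with hc2
  set c1 := 2 * b1 * b0 with hc1
  set c0 := b0 ^ 2 - E with hc0
  have E1 : c3 * q ^ 3 + c2 * q ^ 2 + c1 * q + c0 = 0 := by
    rw [hc3, hc2, hc1, hc0, hE]
    linear_combination (s * q ^ 2 + b1 * q + b0 + p) * hpq - q ^ 4 * hs
  have E2 : c3 * lam ^ 3 + c2 * lam ^ 2 + c1 * lam + c0 = 0 := by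
    rw [hc3, hc2, hc1, hc0, hE]
    linear_combination (s * lam ^ 2 + b1 * lam + b0 + mu) * hplam - lam ^ 4 * hs
      - hlevel
  -- Vieta: q' is chosen so that q + lam + q' is minus the sum-of-roots coefficient
  have E3 : c3 * (q + lam + q') + c2 = 0 := by
    have h2 : (2 : ℂ) * b1 * s ≠ 0 := by
      simpa [mul_assoc] using mul_ne_zero (two_ne_zero (α := ℂ)) hden
    have hs0 : s ≠ 0 := right_ne_zero_of_mul hden
    have hb0 : b1 ≠ 0 := left_ne_zero_of_mul hden
    rw [hq', hc3, hc2]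
    field_simp [h2, hs0, hb0]
    ring
  have key : (q - lam) * (c3 * q' ^ 3 + c2 * q' ^ 2 + c1 * q' + c0) = 0 := by
    linear_combination (q' - lam) * E1 - (q' - q) * E2
      + (q - lam) * (q' - q) * (q' - lam) * E3
  have hGq' : c3 * q' ^ 3 + c2 * q' ^ 2 + c1 * q' + c0 = 0 := by
    rcases mul_eq_zero.mp key with h | h
    · exact absurd h hd
    · exact h
  -- conclude
  have hPq' : P q' = s * q' ^ 2 + b1 * q' + b0 := hPb q'
  rw [hp', hPq']
  rw [hc3, hc2, hc1, hc0, hE] at hGq'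
  linear_combination hGq' + q' ^ 4 * hs
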